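/- For every ε > 0, the baker's map β on C × C is, modulo transpositions, a product of baker's maps each of whose supports is a cylinder set of diameter less than ε (with respect to a fixed metric inducing the product topology). -/

import Mathlib

/-- The Cantor set, modeled as infinite binary sequences. -/
abbrev C := ℕ → Bool

def shift (x : C) : C := fun n => x (n + 1)

def prepend (b : Bool) (y : C) : C
  | 0 => b
  | n + 1 => y n

/-- Concatenate a finite binary word with an infinite binary sequence. -/
def cat (u : List Bool) (w : C) : C := fun n =>
  if h : n < u.length then u.get ⟨n, h⟩ else w (n - u.length)

/-- The cylinder of all infinite sequences with prefix `u`. -/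
def cyl (u : List Bool) : Set C := Set.range (cat u)

/-- `φ` is the baker's map supported on the cylinder set `[u] × [v]`: on that cylinder it
moves the first digit after `u` of the first coordinate to just after `v` in the second
coordinate, and it is the identity elsewhere. -/
def IsBaker (u v : List Bool) (φ : Equiv.Perm (C × C)) : Prop :=
  (∀ w w' : C, φ (cat u w, cat v w') = (cat u (shift w), cat v (prepend (w 0) w'))) ∧
  ∀ p : C × C, p ∉ cyl u ×ˢ cyl v → φ p = p

/-- `φ` is a transposition of two disjoint cylinder sets in `C × C`: it swaps them by
prefix replacement and fixes everything else. -/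
def IsCylTransposition (φ : Equiv.Perm (C × C)) : Prop :=
  ∃ u v u' v' : List Bool,
    (cyl u ×ˢ cyl v) ∩ (cyl u' ×ˢ cyl v') = ∅ ∧
    (∀ w w' : C, φ (cat u w, cat v w') = (cat u' w, cat v' w')) ∧
    (∀ w w' : C, φ (cat u' w, cat v' w') = (cat u w, cat v w')) ∧
    ∀ p : C × C, p ∉ (cyl u ×ˢ cyl v) ∪ (cyl u' ×ˢ cyl v') → φ p = p

@[simp] lemma prepend_zero (b : Bool) (y : C) : prepend b y 0 = b := rfl
@[simp] lemma prepend_succ (b : Bool) (y : C) (n : ℕ) : prepend b y (n + 1) = y n := rfl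
@[simp] lemma shift_apply (x : C) (n : ℕ) : shift x n = x (n + 1) := rfl

@[simp] lemma shift_prepend (b : Bool) (y : C) : shift (prepend b y) = y := rfl

@[simp] lemma prepend_shift (x : C) : prepend (x 0) (shift x) = x := by
  funext n; cases n <;> rfl

def tail (u : List Bool) (x : C) : C := fun n => x (n + u.length)

@[simp] lemma tail_cat (u : List Bool) (w : C) : tail u (cat u w) = w := by
  funext n
  simp [tail, cat]

lemma cat_mem_cyl (u : List Bool) (w : C) : cat u w ∈ cyl u := ⟨w, rfl⟩

lemma cat_tail {u : List Bool} {x : C} (h : x ∈ cyl u) : cat u (tail u x) = x := by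
  obtain ⟨w, rfl⟩ := h
  rw [tail_cat]

lemma cat_append_single (u : List Bool) (b : Bool) (w : C) :
    cat (u ++ [b]) w = cat u (prepend b w) := by
  funext n
  rcases lt_trichotomy n u.length with h | h | h
  · rw [cat, cat, dif_pos (show n < (u ++ [b]).length by simp; omega), dif_pos h]
    simp [List.getElem_append_left h]
  · subst h
    rw [cat, cat, dif_neg (lt_irrefl _), dif_pos (by simp)]
    simp
  · rw [cat, cat, dif_neg (by simp only [List.length_append, List.length_singleton]; omega), dif_neg (by omega)]
    obtain ⟨k, hk⟩ : ∃ k, n - u.length = k + 1 := ⟨n - u.length - 1, by omega⟩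
    rw [hk, prepend_succ]
    congr 1
    simp; omega

lemma cat_append_pair (v : List Bool) (a b : Bool) (w : C) :
    cat (v ++ [a, b]) w = cat v (prepend a (prepend b w)) := by
  have h : v ++ [a, b] = (v ++ [a]) ++ [b] := by simp
  rw [h, cat_append_single, cat_append_single]

lemma apply_length_of_mem_cyl_append {u : List Bool} {b : Bool} {x : C}
    (h : x ∈ cyl (u ++ [b])) : x u.length = b := by
  obtain ⟨w, rfl⟩ := h
  rw [cat_append_single, cat, dif_neg (lt_irrefl _)]
  simp

lemma mem_cyl_append_of {u : List Bool} {b : Bool} {z : C} (h : z 0 = b) :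
    cat u z ∈ cyl (u ++ [b]) :=
  ⟨shift z, by rw [cat_append_single, ← h, prepend_shift]⟩

lemma cyl_append_subset (u : List Bool) (b : Bool) : cyl (u ++ [b]) ⊆ cyl u := by
  rintro x ⟨w, rfl⟩
  rw [cat_append_single]
  exact cat_mem_cyl _ _

lemma not_mem_cyl_append {u : List Bool} {b c : Bool} (hbc : b ≠ c) (w : C) :
    cat u (prepend b w) ∉ cyl (u ++ [c]) := by
  intro h
  have := apply_length_of_mem_cyl_append h
  rw [cat, dif_neg (lt_irrefl _)] at this
  simp at this
  exact hbc this

@[simp] lemma cat_nil (w : C) : cat [] w = w := by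
  funext n; simp [cat]

open scoped Classical

/-- A permutation of `C × C` supported on `[u] × [v]`, acting there by a bijection of tails. -/
noncomputable def cylPerm (u v : List Bool) (f g : C × C → C × C)
    (hgf : ∀ q, g (f q) = q) (hfg : ∀ q, f (g q) = q) : Equiv.Perm (C × C) where
  toFun p := if p.1 ∈ cyl u ∧ p.2 ∈ cyl v then
      (cat u (f (tail u p.1, tail v p.2)).1, cat v (f (tail u p.1, tail v p.2)).2) else p
  invFun p := if p.1 ∈ cyl u ∧ p.2 ∈ cyl v then
      (cat u (g (tail u p.1, tail v p.2)).1, cat v (g (tail u p.1, tail v p.2)).2) else p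
  left_inv := by
    intro p
    dsimp only
    by_cases h : p.1 ∈ cyl u ∧ p.2 ∈ cyl v
    · rw [if_pos h, if_pos ⟨cat_mem_cyl _ _, cat_mem_cyl _ _⟩]
      simp only [tail_cat, Prod.mk.injEq]
      rw [show ((f (tail u p.1, tail v p.2)).1, (f (tail u p.1, tail v p.2)).2)
            = f (tail u p.1, tail v p.2) from rfl, hgf]
      simp [cat_tail h.1, cat_tail h.2]
    · rw [if_neg h, if_neg h]
  right_inv := by
    intro p
    dsimp only
    by_cases h : p.1 ∈ cyl u ∧ p.2 ∈ cyl v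
    · rw [if_pos h, if_pos ⟨cat_mem_cyl _ _, cat_mem_cyl _ _⟩]
      simp only [tail_cat, Prod.mk.injEq]
      rw [show ((g (tail u p.1, tail v p.2)).1, (g (tail u p.1, tail v p.2)).2)
            = g (tail u p.1, tail v p.2) from rfl, hfg]
      simp [cat_tail h.1, cat_tail h.2]
    · rw [if_neg h, if_neg h]

lemma cylPerm_apply_cat {u v : List Bool} {f g : C × C → C × C} {hgf hfg}
    (w w' : C) :
    cylPerm u v f g hgf hfg (cat u w, cat v w') = (cat u (f (w, w')).1, cat v (f (w, w')).2) := by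
  show (if _ then _ else _) = _
  rw [if_pos ⟨cat_mem_cyl _ _, cat_mem_cyl _ _⟩]
  simp only [tail_cat]

lemma cylPerm_apply_of_not {u v : List Bool} {f g : C × C → C × C} {hgf hfg}
    {p : C × C} (h : ¬(p.1 ∈ cyl u ∧ p.2 ∈ cyl v)) :
    cylPerm u v f g hgf hfg p = p := by
  show (if _ then _ else _) = _
  rw [if_neg h]

/-- The baker's map supported on `[u] × [v]`. -/
noncomputable def baker (u v : List Bool) : Equiv.Perm (C × C) :=
  cylPerm u v (fun q => (shift q.1, prepend (q.1 0) q.2))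
    (fun q => (prepend (q.2 0) q.1, shift q.2))
    (by intro q; simp) (by intro q; simp)

lemma baker_apply_cat (u v : List Bool) (w w' : C) :
    baker u v (cat u w, cat v w') = (cat u (shift w), cat v (prepend (w 0) w')) :=
  cylPerm_apply_cat w w'

lemma baker_apply_of_not {u v : List Bool} {p : C × C}
    (h : ¬(p.1 ∈ cyl u ∧ p.2 ∈ cyl v)) : baker u v p = p :=
  cylPerm_apply_of_not h

/-- Transposition swapping `[u0]×[v1]` with `[u1]×[v0]`. -/
noncomputable def transpH (u v : List Bool) : Equiv.Perm (C × C) :=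
  cylPerm u v (fun q => (prepend (q.2 0) (shift q.1), prepend (q.1 0) (shift q.2)))
    (fun q => (prepend (q.2 0) (shift q.1), prepend (q.1 0) (shift q.2)))
    (by intro q; simp) (by intro q; simp)

lemma transpH_apply_cat (u v : List Bool) (w w' : C) :
    transpH u v (cat u w, cat v w') =
      (cat u (prepend (w' 0) (shift w)), cat v (prepend (w 0) (shift w'))) :=
  cylPerm_apply_cat w w'

lemma transpH_apply_of_not {u v : List Bool} {p : C × C}
    (h : ¬(p.1 ∈ cyl u ∧ p.2 ∈ cyl v)) : transpH u v p = p :=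
  cylPerm_apply_of_not h

def swap2 (w : C) : C := fun n =>
  match n with
  | 0 => w 1
  | 1 => w 0
  | (n + 2) => w (n + 2)

@[simp] lemma swap2_swap2 (w : C) : swap2 (swap2 w) = w := by
  funext n
  match n with
  | 0 => rfl
  | 1 => rfl
  | (n + 2) => rfl

lemma swap2_prepend_prepend (a b : Bool) (w : C) :
    swap2 (prepend a (prepend b w)) = prepend b (prepend a w) := by
  funext n
  match n with
  | 0 => rfl
  | 1 => rfl
  | (n + 2) => rfl

lemma prepend_prepend_shift2 (y : C) :
    prepend (y 0) (prepend (y 1) (shift (shift y))) = y := by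
  funext n
  match n with
  | 0 => rfl
  | 1 => rfl
  | (n + 2) => rfl

lemma swap2_eq_self {w : C} (h : w 0 = w 1) : swap2 w = w := by
  funext n
  match n with
  | 0 => exact h.symm
  | 1 => exact h
  | (n + 2) => rfl

/-- Transposition swapping `[u]×[v01]` with `[u]×[v10]`. -/
noncomputable def transpV (u v : List Bool) : Equiv.Perm (C × C) :=
  cylPerm u v (fun q => (q.1, swap2 q.2)) (fun q => (q.1, swap2 q.2))
    (by intro q; simp) (by intro q; simp)

lemma transpV_apply_cat (u v : List Bool) (w w' : C) :
    transpV u v (cat u w, cat v w') = (cat u w, cat v (swap2 w')) :=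
  cylPerm_apply_cat w w'

lemma transpV_apply_of_not {u v : List Bool} {p : C × C}
    (h : ¬(p.1 ∈ cyl u ∧ p.2 ∈ cyl v)) : transpV u v p = p :=
  cylPerm_apply_of_not h

lemma baker_append_left_apply (u : List Bool) (v : List Bool) (b : Bool) (w w' : C) :
    baker (u ++ [b]) v (cat u (prepend b w), cat v w') =
      (cat u (prepend b (shift w)), cat v (prepend (w 0) w')) := by
  rw [← cat_append_single u b w, baker_apply_cat, cat_append_single]

lemma baker_append_right_apply (u v : List Bool) (c : Bool) (w w' : C) :
    baker u (v ++ [c]) (cat u w, cat v (prepend c w')) =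
      (cat u (shift w), cat v (prepend c (prepend (w 0) w'))) := by
  rw [← cat_append_single v c w', baker_apply_cat, cat_append_single]

lemma baker_append_left_fix {b c : Bool} (hbc : b ≠ c) (u v : List Bool) (w : C) (y : C) :
    baker (u ++ [c]) v (cat u (prepend b w), y) = (cat u (prepend b w), y) :=
  baker_apply_of_not (fun hh => not_mem_cyl_append hbc w hh.1)

lemma baker_append_right_fix {b c : Bool} (hbc : b ≠ c) (u v : List Bool) (x : C) (w : C) :
    baker u (v ++ [c]) (x, cat v (prepend b w)) = (x, cat v (prepend b w)) :=
  baker_apply_of_not (fun hh => not_mem_cyl_append hbc w hh.2)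

lemma baker_eq_H (u v : List Bool) :
    baker u v = transpH u v * baker (u ++ [false]) v * baker (u ++ [true]) v := by
  apply Equiv.ext
  rintro ⟨x, y⟩
  simp only [Equiv.Perm.mul_apply]
  by_cases h : x ∈ cyl u ∧ y ∈ cyl v
  · obtain ⟨⟨z, rfl⟩, ⟨y', rfl⟩⟩ := h
    obtain ⟨b, z', rfl⟩ : ∃ b z', z = prepend b z' := ⟨z 0, shift z, (prepend_shift z).symm⟩
    cases b
    · rw [baker_append_left_fix (by simp), baker_append_left_apply, transpH_apply_cat,
        baker_apply_cat]
      simp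
    · rw [baker_append_left_apply, baker_append_left_fix (by simp), transpH_apply_cat,
        baker_apply_cat]
      simp
  · rw [baker_apply_of_not h]
    have h1 : ¬(x ∈ cyl (u ++ [true]) ∧ y ∈ cyl v) :=
      fun hh => h ⟨cyl_append_subset u true hh.1, hh.2⟩
    have h0 : ¬(x ∈ cyl (u ++ [false]) ∧ y ∈ cyl v) :=
      fun hh => h ⟨cyl_append_subset u false hh.1, hh.2⟩
    rw [baker_apply_of_not (p := (x, y)) h1, baker_apply_of_not (p := (x, y)) h0,
      transpH_apply_of_not (p := (x, y)) h]

lemma baker_eq_V (u v : List Bool) :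
    baker u v = transpV u v * baker u (v ++ [false]) * baker u (v ++ [true]) := by
  apply Equiv.ext
  rintro ⟨x, y⟩
  simp only [Equiv.Perm.mul_apply]
  by_cases h : x ∈ cyl u ∧ y ∈ cyl v
  · obtain ⟨⟨z, rfl⟩, ⟨y', rfl⟩⟩ := h
    obtain ⟨c, w', rfl⟩ : ∃ c w', y' = prepend c w' := ⟨y' 0, shift y', (prepend_shift y').symm⟩
    cases c
    · rw [baker_append_right_fix (by simp), baker_append_right_apply, transpV_apply_cat,
        swap2_prepend_prepend, baker_apply_cat]
    · rw [baker_append_right_apply, baker_append_right_fix (by simp), transpV_apply_cat,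
        swap2_prepend_prepend, baker_apply_cat]
  · rw [baker_apply_of_not h]
    have h1 : ¬(x ∈ cyl u ∧ y ∈ cyl (v ++ [true])) :=
      fun hh => h ⟨hh.1, cyl_append_subset v true hh.2⟩
    have h0 : ¬(x ∈ cyl u ∧ y ∈ cyl (v ++ [false])) :=
      fun hh => h ⟨hh.1, cyl_append_subset v false hh.2⟩
    rw [baker_apply_of_not (p := (x, y)) h1, baker_apply_of_not (p := (x, y)) h0,
      transpV_apply_of_not (p := (x, y)) h]

lemma isBaker_baker (u v : List Bool) : IsBaker u v (baker u v) := by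
  constructor
  · exact fun w w' => baker_apply_cat u v w w'
  · intro p hp
    exact baker_apply_of_not (by rwa [Set.mem_prod] at hp)

lemma isCylTransposition_transpH (u v : List Bool) : IsCylTransposition (transpH u v) := by
  refine ⟨u ++ [false], v ++ [true], u ++ [true], v ++ [false], ?_, ?_, ?_, ?_⟩
  · rw [Set.eq_empty_iff_forall_notMem]
    rintro ⟨x, y⟩ ⟨⟨hx1, -⟩, ⟨hx2, -⟩⟩
    have e1 := apply_length_of_mem_cyl_append hx1
    have e2 := apply_length_of_mem_cyl_append hx2
    rw [e1] at e2
    exact Bool.noConfusion e2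
  · intro w w'
    rw [cat_append_single, cat_append_single, cat_append_single, cat_append_single,
      transpH_apply_cat]
    simp
  · intro w w'
    rw [cat_append_single, cat_append_single, cat_append_single, cat_append_single,
      transpH_apply_cat]
    simp
  · rintro ⟨x, y⟩ hp
    by_cases h : x ∈ cyl u ∧ y ∈ cyl v
    · obtain ⟨⟨z, rfl⟩, ⟨y', rfl⟩⟩ := h
      rw [transpH_apply_cat]
      have hzz : z 0 = y' 0 := by
        rcases hb : z 0 with _ | _ <;> rcases hb' : y' 0 with _ | _
        · rfl
        · exact absurd (Set.mem_union_left _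
            (Set.mem_prod.mpr ⟨mem_cyl_append_of hb, mem_cyl_append_of hb'⟩)) hp
        · exact absurd (Set.mem_union_right _
            (Set.mem_prod.mpr ⟨mem_cyl_append_of hb, mem_cyl_append_of hb'⟩)) hp
        · rfl
      rw [hzz, ← hzz]
      nth_rewrite 2 [hzz]
      rw [prepend_shift, prepend_shift]
    · exact transpH_apply_of_not (p := (x, y)) h

lemma isCylTransposition_transpV (u v : List Bool) : IsCylTransposition (transpV u v) := by
  refine ⟨u, v ++ [false, true], u, v ++ [true, false], ?_, ?_, ?_, ?_⟩
  · rw [Set.eq_empty_iff_forall_notMem]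
    rintro ⟨x, y⟩ ⟨⟨-, hy1⟩, ⟨-, hy2⟩⟩
    have h1 : y ∈ cyl ((v ++ [false]) ++ [true]) := by simpa using hy1
    have h2 : y ∈ cyl ((v ++ [true]) ++ [false]) := by simpa using hy2
    have e1 := apply_length_of_mem_cyl_append (cyl_append_subset _ _ h1)
    have e2 := apply_length_of_mem_cyl_append (cyl_append_subset _ _ h2)
    rw [e1] at e2
    exact Bool.noConfusion e2
  · intro w w'
    rw [cat_append_pair, cat_append_pair, transpV_apply_cat, swap2_prepend_prepend]
  · intro w w'
    rw [cat_append_pair, cat_append_pair, transpV_apply_cat, swap2_prepend_prepend]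
  · rintro ⟨x, y⟩ hp
    by_cases h : x ∈ cyl u ∧ y ∈ cyl v
    · obtain ⟨⟨z, rfl⟩, ⟨y', rfl⟩⟩ := h
      rw [transpV_apply_cat]
      have hy01 : y' 0 = y' 1 := by
        have hrep : ∀ a b : Bool, y' 0 = a → y' 1 = b →
            cat v y' ∈ cyl (v ++ [a, b]) := by
          intro a b ha hb
          refine ⟨shift (shift y'), ?_⟩
          rw [cat_append_pair, ← ha, ← hb, prepend_prepend_shift2]
        rcases hb : y' 0 with _ | _ <;> rcases hb' : y' 1 with _ | _
        · rfl
        · exact absurd (Set.mem_union_left _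
            (Set.mem_prod.mpr ⟨cat_mem_cyl u z, hrep _ _ hb hb'⟩)) hp
        · exact absurd (Set.mem_union_right _
            (Set.mem_prod.mpr ⟨cat_mem_cyl u z, hrep _ _ hb hb'⟩)) hp
        · rfl
      rw [swap2_eq_self hy01]
    · exact transpV_apply_of_not (p := (x, y)) h

lemma decomp : ∀ (n : ℕ) (u v : List Bool), ∃ L : List (Equiv.Perm (C × C)),
    baker u v = L.prod ∧ ∀ f ∈ L, IsCylTransposition f ∨
      ∃ a b : List Bool, f = baker a b ∧ u.length + n ≤ a.length ∧ v.length + n ≤ b.length := by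
  intro n
  induction n with
  | zero =>
    intro u v
    refine ⟨[baker u v], (List.prod_singleton).symm, ?_⟩
    intro f hf
    rw [List.mem_singleton] at hf
    subst hf
    exact Or.inr ⟨u, v, rfl, by omega, by omega⟩
  | succ n ih =>
    intro u v
    obtain ⟨L00, h00, m00⟩ := ih (u ++ [false]) (v ++ [false])
    obtain ⟨L01, h01, m01⟩ := ih (u ++ [false]) (v ++ [true])
    obtain ⟨L10, h10, m10⟩ := ih (u ++ [true]) (v ++ [false])
    obtain ⟨L11, h11, m11⟩ := ih (u ++ [true]) (v ++ [true])
    refine ⟨transpH u v :: transpV (u ++ [false]) v ::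
      (L00 ++ L01 ++ (transpV (u ++ [true]) v :: (L10 ++ L11))), ?_, ?_⟩
    · rw [baker_eq_H u v, baker_eq_V (u ++ [false]) v, baker_eq_V (u ++ [true]) v]
      simp only [List.prod_cons, List.prod_append, ← h00, ← h01, ← h10, ← h11]
      group
    · intro f hf
      simp only [List.mem_cons, List.mem_append] at hf
      have len : ∀ (a : List Bool) (b : Bool), (a ++ [b]).length = a.length + 1 := by simp
      rcases hf with rfl | rfl | (hf | hf) | rfl | hf | hf
      · exact Or.inl (isCylTransposition_transpH u v)
      · exact Or.inl (isCylTransposition_transpV _ _)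
      · rcases m00 f hf with h | ⟨a, b, hab, ha, hb⟩
        · exact Or.inl h
        · exact Or.inr ⟨a, b, hab, by rw [len] at ha; omega, by rw [len] at hb; omega⟩
      · rcases m01 f hf with h | ⟨a, b, hab, ha, hb⟩
        · exact Or.inl h
        · exact Or.inr ⟨a, b, hab, by rw [len] at ha; omega, by rw [len] at hb; omega⟩
      · exact Or.inl (isCylTransposition_transpV _ _)
      · rcases m10 f hf with h | ⟨a, b, hab, ha, hb⟩
        · exact Or.inl h
        · exact Or.inr ⟨a, b, hab, by rw [len] at ha; omega, by rw [len] at hb; omega⟩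
      · rcases m11 f hf with h | ⟨a, b, hab, ha, hb⟩
        · exact Or.inl h
        · exact Or.inr ⟨a, b, hab, by rw [len] at ha; omega, by rw [len] at hb; omega⟩


/-- Statement 3 of Brin's lemma: the baker's map is, modulo transpositions, a product of
baker's maps with arbitrarily small cylinder supports.  With the metric
`d(x, y) = 2^{-min{n : x n ≠ y n}}` on `C` and the max metric on `C × C`, the cylinder
`[u] × [v]` has diameter `2^{-min(|u|, |v|)}`, which is the quantity required to be `< ε`. -/
theorem stmt_12 (β : Equiv.Perm (C × C))
    (hβ : ∀ x y : C, β (x, y) = (shift x, prepend (x 0) y)) :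
    ∀ ε : ℝ, 0 < ε →
      ∃ L : List (Equiv.Perm (C × C)),
        β = L.prod ∧
        ∀ f ∈ L, IsCylTransposition f ∨
          ∃ u v : List Bool, IsBaker u v f ∧
            (2 : ℝ) ^ (-(min u.length v.length : ℤ)) < ε := by
  intro ε hε
  obtain ⟨n, hn⟩ : ∃ n : ℕ, (2 : ℝ) ^ (-(n : ℤ)) < ε := by
    obtain ⟨n, hn⟩ := exists_pow_lt_of_lt_one hε (by norm_num : (1 : ℝ) / 2 < 1)
    refine ⟨n, ?_⟩
    have : (2 : ℝ) ^ (-(n : ℤ)) = (1 / 2 : ℝ) ^ n := by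
      rw [zpow_neg, zpow_natCast, one_div, inv_pow]
    rwa [this]
  obtain ⟨L, hL, hmem⟩ := decomp n [] []
  refine ⟨L, ?_, ?_⟩
  · rw [← hL]
    apply Equiv.ext
    rintro ⟨x, y⟩
    rw [hβ]
    conv_rhs => rw [show x = cat [] x from (cat_nil x).symm,
      show y = cat [] y from (cat_nil y).symm]
    rw [baker_apply_cat]
    simp
  · intro f hf
    rcases hmem f hf with h | ⟨a, b, rfl, ha, hb⟩
    · exact Or.inl h
    · refine Or.inr ⟨a, b, isBaker_baker a b, lt_of_le_of_lt ?_ hn⟩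
      have hexp : -(min a.length b.length : ℤ) ≤ -(n : ℤ) := by
        simp only [List.length_nil, Nat.zero_add] at ha hb
        omega
      exact zpow_le_zpow_right₀ one_le_two hexp
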